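/- Let A₀, A₁ be n×n real matrices and suppose there exists a symmetric positive definite n×n matrix P such that P - A₀ᵀPA₀ and P - A₁ᵀPA₁ are both positive definite (a common quadratic Lyapunov function). Let W and S₀ be positive semidefinite n×n matrices. Then for every switching sequence g : ℕ → {0,1}, the iteration S_{k+1} = A_{g(k)} S_k A_{g(k)}ᵀ + W with initial condition S₀ admits a uniform bound: there exists a symmetric matrix S̄ (depending on A₀, A₁, P, W, S₀ but not on g) such that S_k ⪯ S̄ for all k ≥ 0. -/

import Mathlib

open Matrix

section StmtAux

variable {n : ℕ}

private lemma quad_nonneg' {M : Matrix (Fin n) (Fin n) ℝ} (h : M.PosSemidef) (x : Fin n → ℝ) :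
    0 ≤ x ⬝ᵥ (M *ᵥ x) := by
  have := h.dotProduct_mulVec_nonneg x
  simpa [star_trivial] using this

private lemma trace_nonneg_of_psd' {M : Matrix (Fin n) (Fin n) ℝ} (h : M.PosSemidef) :
    0 ≤ M.trace := by
  rw [Matrix.trace]
  refine Finset.sum_nonneg fun i _ => ?_
  have := quad_nonneg' h (Pi.single i 1)
  simpa [dotProduct, Matrix.mulVec, Pi.single_apply, mul_ite, ite_mul,
    Finset.sum_ite_eq, Finset.sum_ite_eq', Matrix.diag] using this

private lemma trace_mul_nonneg' {X Y : Matrix (Fin n) (Fin n) ℝ} (hX : X.PosSemidef)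
    (hY : Y.PosSemidef) : 0 ≤ (X * Y).trace := by
  obtain ⟨B, rfl⟩ : ∃ B : Matrix (Fin n) (Fin n) ℝ, X = Bᴴ * B := by
    open scoped MatrixOrder in
    simpa [Matrix.star_eq_conjTranspose] using CStarAlgebra.nonneg_iff_eq_star_mul_self.mp hX.nonneg
  rw [Matrix.mul_assoc, Matrix.trace_mul_comm]
  exact trace_nonneg_of_psd' (by simpa [Matrix.mul_assoc] using hY.mul_mul_conjTranspose_same B)

private lemma quad_le_trace' {S : Matrix (Fin n) (Fin n) ℝ} (hS : S.PosSemidef) (x : Fin n → ℝ) :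
    x ⬝ᵥ (S *ᵥ x) ≤ S.trace * (x ⬝ᵥ x) := by
  obtain ⟨B, rfl⟩ : ∃ B : Matrix (Fin n) (Fin n) ℝ, S = Bᴴ * B := by
    open scoped MatrixOrder in
    simpa [Matrix.star_eq_conjTranspose] using CStarAlgebra.nonneg_iff_eq_star_mul_self.mp hS.nonneg
  have h1 : x ⬝ᵥ ((Bᴴ * B) *ᵥ x) = (B *ᵥ x) ⬝ᵥ (B *ᵥ x) := by
    rw [← Matrix.mulVec_mulVec, Matrix.dotProduct_mulVec,
      show Bᴴ = Bᵀ from rfl, Matrix.vecMul_transpose]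
  rw [h1]
  have h2 : (Bᴴ * B).trace = ∑ i, ∑ j, (B i j) ^ 2 := by
    rw [Matrix.trace]
    rw [Finset.sum_comm]
    congr 1
    ext j
    simp [Matrix.diag, Matrix.mul_apply, Matrix.conjTranspose_apply, sq]
  rw [h2]
  have h3 : (B *ᵥ x) ⬝ᵥ (B *ᵥ x) = ∑ i, (∑ j, B i j * x j) ^ 2 := by
    simp [dotProduct, Matrix.mulVec, sq]
  rw [h3, Finset.sum_mul]
  refine Finset.sum_le_sum fun i _ => ?_
  calc (∑ j, B i j * x j) ^ 2 ≤ (∑ j, (B i j) ^ 2) * ∑ j, (x j) ^ 2 :=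
        Finset.sum_mul_sq_le_sq_mul_sq _ _ _
    _ = (∑ j, (B i j) ^ 2) * (x ⬝ᵥ x) := by simp [dotProduct, sq]

private lemma smul_one_sub_psd' {S : Matrix (Fin n) (Fin n) ℝ} (hS : S.PosSemidef) :
    (S.trace • (1 : Matrix (Fin n) (Fin n) ℝ) - S).PosSemidef := by
  refine Matrix.PosSemidef.of_dotProduct_mulVec_nonneg ?_ ?_
  · have h1 : Sᴴ = S := hS.1
    simp only [Matrix.IsHermitian, Matrix.conjTranspose_sub, Matrix.conjTranspose_smul,
      Matrix.conjTranspose_one, h1, star_trivial]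
  · intro x
    have := quad_le_trace' hS x
    have hx : star x = x := rfl
    simp only [hx, Matrix.sub_mulVec, Matrix.smul_mulVec, Matrix.one_mulVec,
      dotProduct_sub, dotProduct_smul, smul_eq_mul]
    linarith

private lemma psd_smul' {M : Matrix (Fin n) (Fin n) ℝ} (hM : M.PosSemidef) {c : ℝ} (hc : 0 ≤ c) :
    (c • M).PosSemidef := by
  refine Matrix.PosSemidef.of_dotProduct_mulVec_nonneg ?_ ?_
  · rw [Matrix.IsHermitian, Matrix.conjTranspose_smul, star_trivial, hM.1.eq]
  · intro x
    have := quad_nonneg' hM x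
    have hx : star x = x := rfl
    simp only [hx, Matrix.smul_mulVec, dotProduct_smul, smul_eq_mul]
    exact mul_nonneg hc this

private lemma exists_pos_smul_psd' {Q R : Matrix (Fin n) (Fin n) ℝ}
    (hQ : Q.PosDef) (hR : R.IsHermitian) :
    ∃ δ : ℝ, 0 < δ ∧ (Q - δ • R).PosSemidef := by
  rcases Nat.eq_zero_or_pos n with hn | hn
  · subst hn
    refine ⟨1, one_pos, Matrix.PosSemidef.of_dotProduct_mulVec_nonneg (Matrix.ext fun i _ => i.elim0) (fun x => by simp [dotProduct])⟩
  · have i0 : Fin n := ⟨0, hn⟩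
    set E := EuclideanSpace ℝ (Fin n) with hE
    set e : E ≃L[ℝ] (Fin n → ℝ) := EuclideanSpace.equiv (Fin n) ℝ with he
    have hcont : ∀ M : Matrix (Fin n) (Fin n) ℝ,
        Continuous (fun x : E => (e x) ⬝ᵥ (M *ᵥ (e x))) := fun M =>
      (e.continuous).dotProduct (continuous_const.matrix_mulVec e.continuous)
    have hx₀ : (EuclideanSpace.single i0 (1:ℝ) : E) ∈ Metric.sphere (0:E) 1 := by
      simp [EuclideanSpace.norm_single]
    have hcomp : IsCompact (Metric.sphere (0:E) 1) := isCompact_sphere 0 1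
    obtain ⟨xm, hxm, hmin⟩ := hcomp.exists_isMinOn ⟨_, hx₀⟩ (hcont Q).continuousOn
    obtain ⟨xM, hxM, hmax⟩ := hcomp.exists_isMaxOn ⟨_, hx₀⟩ (hcont R).continuousOn
    set m : ℝ := (e xm) ⬝ᵥ (Q *ᵥ (e xm)) with hm
    set C : ℝ := max ((e xM) ⬝ᵥ (R *ᵥ (e xM))) 1 with hC
    have hmpos : 0 < m := by
      refine hQ.dotProduct_mulVec_pos (x := e xm) ?_
      intro h
      have : xm = 0 := by
        have := congrArg e.symm h
        simpa using this
      rw [this] at hxm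
      simp at hxm
    have hCpos : (0:ℝ) < C := lt_of_lt_of_le one_pos (le_max_right _ _)
    refine ⟨m / C, div_pos hmpos hCpos, Matrix.PosSemidef.of_dotProduct_mulVec_nonneg ?_ ?_⟩
    · exact hQ.1.sub (by rw [Matrix.IsHermitian, Matrix.conjTranspose_smul, star_trivial, hR.eq])
    · intro x
      have hxstar : star x = x := rfl
      rw [hxstar]
      rcases eq_or_ne x 0 with rfl | hx
      · simp
      · set y : E := ‖e.symm x‖⁻¹ • (e.symm x) with hy
        have hnx : (0:ℝ) < ‖e.symm x‖ := by
          rw [norm_pos_iff]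
          simpa using hx
        have hymem : y ∈ Metric.sphere (0:E) 1 := by
          exact mem_sphere_zero_iff_norm.mpr (by simp [hy, norm_smul, abs_of_pos (inv_pos.mpr hnx), inv_mul_cancel₀ hnx.ne'])
        have hey : e y = ‖e.symm x‖⁻¹ • x := by
          simp [hy, _root_.map_smul]
        have h1 : m ≤ (e y) ⬝ᵥ (Q *ᵥ (e y)) := hmin hymem
        have h2 : (e y) ⬝ᵥ (R *ᵥ (e y)) ≤ C := le_trans (hmax hymem) (le_max_left _ _)
        have key : 0 ≤ (e y) ⬝ᵥ (Q *ᵥ (e y)) - (m / C) * ((e y) ⬝ᵥ (R *ᵥ (e y))) := by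
          rcases le_or_gt ((e y) ⬝ᵥ (R *ᵥ (e y))) 0 with h | h
          · nlinarith [div_pos hmpos hCpos]
          · have : (m / C) * ((e y) ⬝ᵥ (R *ᵥ (e y))) ≤ (m / C) * C :=
              mul_le_mul_of_nonneg_left h2 (div_pos hmpos hCpos).le
            rw [div_mul_cancel₀ _ hCpos.ne'] at this
            linarith
        set r : ℝ := ‖e.symm x‖ with hr
        have hscaleQ : (e y) ⬝ᵥ (Q *ᵥ (e y)) = r⁻¹ ^ 2 * (x ⬝ᵥ (Q *ᵥ x)) := by
          rw [hey]
          simp [smul_dotProduct, dotProduct_smul, Matrix.mulVec_smul,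
            smul_eq_mul, sq]
          ring
        have hscaleR : (e y) ⬝ᵥ (R *ᵥ (e y)) = r⁻¹ ^ 2 * (x ⬝ᵥ (R *ᵥ x)) := by
          rw [hey]
          simp [smul_dotProduct, dotProduct_smul, Matrix.mulVec_smul,
            smul_eq_mul, sq]
          ring
        rw [hscaleQ, hscaleR] at key
        have hr2 : (0:ℝ) < r⁻¹ ^ 2 := by positivity
        have key2 : 0 ≤ x ⬝ᵥ (Q *ᵥ x) - (m / C) * (x ⬝ᵥ (R *ᵥ x)) := by
          nlinarith
        have heq : x ⬝ᵥ ((Q - (m / C) • R) *ᵥ x)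
            = x ⬝ᵥ (Q *ᵥ x) - (m / C) * (x ⬝ᵥ (R *ᵥ x)) := by
          simp [Matrix.sub_mulVec, Matrix.smul_mulVec, dotProduct_sub,
            dotProduct_smul, smul_eq_mul]
        rw [heq]
        exact key2

end StmtAux

/-- Remark 5 of the paper: a common quadratic Lyapunov function for `A₀` and `A₁` yields
a uniform upper bound, independent of the switching sequence, for the switched affine
covariance recursion `S_{k+1} = A_{g(k)} S_k A_{g(k)}ᵀ + W`. -/
theorem stmt9 (n : ℕ) (A₀ A₁ : Matrix (Fin n) (Fin n) ℝ)
    (P : Matrix (Fin n) (Fin n) ℝ) (hP : P.PosDef)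
    (h₀ : (P - A₀ᵀ * P * A₀).PosDef) (h₁ : (P - A₁ᵀ * P * A₁).PosDef)
    (W S₀ : Matrix (Fin n) (Fin n) ℝ) (hW : W.PosSemidef) (hS₀ : S₀.PosSemidef) :
    ∃ Sbar : Matrix (Fin n) (Fin n) ℝ, Sbarᵀ = Sbar ∧
      ∀ (g : ℕ → Fin 2) (S : ℕ → Matrix (Fin n) (Fin n) ℝ),
        S 0 = S₀ →
        (∀ k, S (k + 1) = ![A₀, A₁] (g k) * S k * (![A₀, A₁] (g k))ᵀ + W) →
        ∀ k, (Sbar - S k).PosSemidef := by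
  obtain ⟨δ₀, hδ₀, hQ₀⟩ := exists_pos_smul_psd' h₀ hP.1
  obtain ⟨δ₁, hδ₁, hQ₁⟩ := exists_pos_smul_psd' h₁ hP.1
  obtain ⟨ε, hε, hPε⟩ := exists_pos_smul_psd' hP (Matrix.isHermitian_one)
  set δ : ℝ := min (min δ₀ δ₁) 1 with hδdef
  have hδpos : 0 < δ := lt_min (lt_min hδ₀ hδ₁) one_pos
  have hδle1 : δ ≤ 1 := min_le_right _ _
  -- contraction inequality for both matrices
  have hcontr : ∀ i : Fin 2,
      ((1 - δ) • P - (![A₀, A₁] i)ᵀ * P * (![A₀, A₁] i)).PosSemidef := by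
    intro i
    have key : ∀ (A : Matrix (Fin n) (Fin n) ℝ) (δ' : ℝ), δ ≤ δ' →
        (P - Aᵀ * P * A - δ' • P).PosSemidef →
        ((1 - δ) • P - Aᵀ * P * A).PosSemidef := by
      intro A δ' hle hpsd
      have heq : (1 - δ) • P - Aᵀ * P * A
          = (P - Aᵀ * P * A - δ' • P) + (δ' - δ) • P := by
        rw [sub_smul, sub_smul, one_smul]
        abel
      rw [heq]
      exact hpsd.add (psd_smul' hP.posSemidef (by linarith))
    fin_cases i
    · exact key A₀ δ₀ (le_trans (min_le_left _ _) (min_le_left _ _)) (by simpa using hQ₀)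
    · exact key A₁ δ₁ (le_trans (min_le_left _ _) (min_le_right _ _)) (by simpa using hQ₁)
  set c : ℝ := max ((P * S₀).trace) ((P * W).trace / δ) with hcdef
  have hPW : 0 ≤ (P * W).trace := trace_mul_nonneg' hP.posSemidef hW
  refine ⟨(c / ε) • (1 : Matrix (Fin n) (Fin n) ℝ), by
    rw [Matrix.transpose_smul, Matrix.transpose_one], ?_⟩
  intro g S hS0 hrec k
  -- main induction : S k is PSD and trace (P * S k) ≤ c
  have main : ∀ k, (S k).PosSemidef ∧ (P * S k).trace ≤ c := by
    intro k
    induction k with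
    | zero => exact ⟨hS0 ▸ hS₀, hS0 ▸ le_max_left _ _⟩
    | succ k ih =>
      obtain ⟨ihpsd, ihtr⟩ := ih
      set A : Matrix (Fin n) (Fin n) ℝ := ![A₀, A₁] (g k) with hA
      have hAeq : (A)ᴴ = Aᵀ := rfl
      have hpsd : (S (k+1)).PosSemidef := by
        rw [hrec k]
        have h := ihpsd.mul_mul_conjTranspose_same A
        exact (show (A * S k * Aᵀ).PosSemidef by simpa [hAeq] using h).add hW
      refine ⟨hpsd, ?_⟩
      have htr1 : (P * (A * S k * Aᵀ)).trace = ((Aᵀ * P * A) * S k).trace := by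
        rw [show P * (A * S k * Aᵀ) = (P * A * S k) * Aᵀ by
              simp only [Matrix.mul_assoc],
          Matrix.trace_mul_comm]
        simp only [Matrix.mul_assoc]
      have htr2 : ((Aᵀ * P * A) * S k).trace ≤ (1 - δ) * (P * S k).trace := by
        have h0 : 0 ≤ (((1 - δ) • P - Aᵀ * P * A) * S k).trace :=
          trace_mul_nonneg' (hcontr (g k)) ihpsd
        rw [Matrix.sub_mul, Matrix.trace_sub, Matrix.smul_mul, Matrix.trace_smul,
          smul_eq_mul] at h0
        linarith
      have hPSk : 0 ≤ (P * S k).trace := trace_mul_nonneg' hP.posSemidef ihpsd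
      have hWc : (P * W).trace ≤ δ * c := by
        have : (P * W).trace / δ ≤ c := le_max_right _ _
        calc (P * W).trace = δ * ((P * W).trace / δ) := by
              field_simp
          _ ≤ δ * c := mul_le_mul_of_nonneg_left this hδpos.le
      have hstep : (P * S (k+1)).trace ≤ (1 - δ) * (P * S k).trace + (P * W).trace := by
        rw [hrec k, Matrix.mul_add, Matrix.trace_add]
        have := htr1 ▸ htr2
        linarith
      have h1δ : (0:ℝ) ≤ 1 - δ := by linarith
      calc (P * S (k+1)).trace ≤ (1 - δ) * (P * S k).trace + (P * W).trace := hstep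
        _ ≤ (1 - δ) * c + δ * c := by
            have := mul_le_mul_of_nonneg_left ihtr h1δ
            linarith
        _ = c := by ring
  obtain ⟨hpsd, htr⟩ := main k
  -- trace bound implies uniform bound
  have htrS : (S k).trace ≤ c / ε := by
    have h0 : 0 ≤ ((P - ε • 1) * S k).trace := trace_mul_nonneg' hPε hpsd
    rw [Matrix.sub_mul, Matrix.trace_sub, Matrix.smul_mul, Matrix.one_mul,
      Matrix.trace_smul, smul_eq_mul] at h0
    rw [le_div_iff₀ hε]
    linarith
  have heq : (c / ε) • (1 : Matrix (Fin n) (Fin n) ℝ) - S k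
      = (c / ε - (S k).trace) • (1 : Matrix (Fin n) (Fin n) ℝ)
        + ((S k).trace • (1 : Matrix (Fin n) (Fin n) ℝ) - S k) := by
    rw [sub_smul]
    abel
  rw [heq]
  exact (psd_smul' Matrix.PosSemidef.one (by linarith)).add (smul_one_sub_psd' hpsd)
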